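/- Claim 4.3 in the case of a nontrivial Weyl reflection: Suppose χ ∈ M satisfies ⟨λ', χ − θ⟩ ≤ 0, r_χ ≥ 1/2, and Q < ⟨λ_0, χ − θ⟩ ≤ η_0/2. Let S ⊆ {1, …, n} be nonempty with ⟨λ', β_i⟩ > 0 for all i ∈ S, and set μ := χ + ∑_{i∈S} β_i. If ⟨λ', μ + ρ⟩ ≠ 0, so that μ⁺ is defined, then |⟨λ_0, μ⁺ − θ⟩| ≤ η_0/2 and r_{μ⁺} ≤ r_χ, with strict inequality r_{μ⁺} < r_χ whenever r_χ > 1/2. -/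
import Mathlib


noncomputable section

/-- The standard pairing between `N_ℝ = ℝ²` and `M_ℝ = ℝ²`. -/
def pairR (lam chi : Fin 2 → ℝ) : ℝ := ∑ k, lam k * chi k

/-- `D := −∑_{i : ⟨λ', β_i⟩ ≤ 0} ⟨λ', β_i⟩`. -/
def Dval {n : ℕ} (β : Fin n → Fin 2 → ℝ) (lam' : Fin 2 → ℝ) : ℝ :=
  -∑ i ∈ Finset.univ.filter (fun i => pairR lam' (β i) ≤ 0), pairR lam' (β i)

/-- `Q := η_0/2 + ∑_{i : ⟨λ', β_i⟩ < 0} ⟨λ_0, β_i⟩`, where `η_0 = −∑_i ⟨λ_0, β_i⟩`. -/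
def Qval {n : ℕ} (β : Fin n → Fin 2 → ℝ) (lam0 lam' : Fin 2 → ℝ) : ℝ :=
  (-∑ i, pairR lam0 (β i)) / 2 +
    ∑ i ∈ Finset.univ.filter (fun i => pairR lam' (β i) < 0), pairR lam0 (β i)

/-- The shifted window width: `r_nu := (|pair lam' (nu - theta)| - pair lam' rho) / D`. -/
def rvalRho {n : ℕ} (β : Fin n → Fin 2 → ℝ) (lam' ρ θ ν : Fin 2 → ℝ) : ℝ :=
  (|pairR lam' (ν - θ)| - pairR lam' ρ) / Dval β lam'

/-- The dominant representative `μ⁺` for the ρ-shifted action of the Weyl group `{1, w₀}`: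
`μ⁺ = μ` if `pair lam' (μ + ρ) < 0`, and `μ⁺ = w₀(μ + ρ) − ρ` if `pair lam' (μ + ρ) > 0`. -/
def muPlus (lam' ρ : Fin 2 → ℝ) (w0 : (Fin 2 → ℝ) →ₗ[ℝ] (Fin 2 → ℝ))
    (μ : Fin 2 → ℝ) : Fin 2 → ℝ :=
  if pairR lam' (μ + ρ) < 0 then μ else w0 (μ + ρ) - ρ

lemma pairR_add (l a b : Fin 2 → ℝ) : pairR l (a + b) = pairR l a + pairR l b := by
  simp [pairR, mul_add, Finset.sum_add_distrib]

lemma pairR_sub (l a b : Fin 2 → ℝ) : pairR l (a - b) = pairR l a - pairR l b := by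
  simp [pairR, mul_sub, Finset.sum_sub_distrib]

lemma pairR_smul (l : Fin 2 → ℝ) (c : ℝ) (a : Fin 2 → ℝ) :
    pairR l (c • a) = c * pairR l a := by
  simp [pairR, Finset.mul_sum, mul_left_comm]; ring

lemma pairR_sum {ι : Type*} (l : Fin 2 → ℝ) (s : Finset ι) (f : ι → Fin 2 → ℝ) :
    pairR l (∑ i ∈ s, f i) = ∑ i ∈ s, pairR l (f i) := by
  simp only [pairR, Finset.sum_apply, Finset.mul_sum]
  exact Finset.sum_comm

def pairL (l : Fin 2 → ℝ) : (Fin 2 → ℝ) →ₗ[ℝ] ℝ where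
  toFun x := pairR l x
  map_add' a b := pairR_add l a b
  map_smul' c a := pairR_smul l c a

/-- Claim 4.3 with a nontrivial Weyl reflection. -/
theorem claim_4_3_weyl {n : ℕ} (hn : 1 ≤ n)
    (β : Fin n → Fin 2 → ℝ)
    (hβint : ∀ i, ∃ b : Fin 2 → ℤ, β i = fun k => ((b k : ℝ)))
    (hspan : Submodule.span ℝ (Set.range β) = ⊤)
    (lam0 : Fin 2 → ℝ) (hlam0 : ∀ i, pairR lam0 (β i) < 0)
    (lam' : Fin 2 → ℝ) (hlam'ne : lam' ≠ 0)
    (hlam'ω : pairR lam' (∑ i, β i) = 0)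
    (hlam'int : ∀ c : Fin 2 → ℤ, ∃ z : ℤ, pairR lam' (fun k => ((c k : ℝ))) = (z : ℝ))
    (ρ : Fin 2 → ℝ)
    (h2ρ : ∃ r : Fin 2 → ℤ, (2 : ℝ) • ρ = fun k => ((r k : ℝ)))
    (hρ0 : pairR lam0 ρ = 0) (hρ' : pairR lam' ρ = -1)
    (w0 : (Fin 2 → ℝ) →ₗ[ℝ] (Fin 2 → ℝ))
    (hw0invol : ∀ ν, w0 (w0 ν) = ν)
    (hw0lam0 : ∀ ν, pairR lam0 (w0 ν) = pairR lam0 ν)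
    (hw0lam' : ∀ ν, pairR lam' (w0 ν) = -pairR lam' ν)
    (θ : Fin 2 → ℝ) (hθ : ∃ c : ℝ, θ = c • (∑ i, β i))
    (χ : Fin 2 → ℝ) (hχM : ∃ c : Fin 2 → ℤ, χ = fun k => ((c k : ℝ)))
    (hχ1 : pairR lam' (χ - θ) ≤ 0)
    (hχ2 : 1 / 2 ≤ rvalRho β lam' ρ θ χ)
    (hχ3 : Qval β lam0 lam' < pairR lam0 (χ - θ))
    (hχ4 : pairR lam0 (χ - θ) ≤ (-∑ i, pairR lam0 (β i)) / 2)
    (S : Finset (Fin n)) (hS : S.Nonempty)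
    (hSpos : ∀ i ∈ S, 0 < pairR lam' (β i))
    (μ : Fin 2 → ℝ) (hμ : μ = χ + ∑ i ∈ S, β i)
    (hμplus : pairR lam' (μ + ρ) ≠ 0) :
    |pairR lam0 (muPlus lam' ρ w0 μ - θ)| ≤ (-∑ i, pairR lam0 (β i)) / 2 ∧
      rvalRho β lam' ρ θ (muPlus lam' ρ w0 μ) ≤ rvalRho β lam' ρ θ χ ∧
      (1 / 2 < rvalRho β lam' ρ θ χ →
        rvalRho β lam' ρ θ (muPlus lam' ρ w0 μ) < rvalRho β lam' ρ θ χ) := by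
  -- basic scalars
  have hθ' : pairR lam' θ = 0 := by
    obtain ⟨c, hc⟩ := hθ
    rw [hc, pairR_smul, hlam'ω, mul_zero]
  set a : ℝ := pairR lam' χ with ha
  have hχθ : pairR lam' (χ - θ) = a := by rw [pairR_sub, hθ']; ring
  have haneg : a ≤ 0 := by rw [← hχθ]; exact hχ1
  -- D > 0
  have hsum0 : ∑ i, pairR lam' (β i) = 0 := by rw [← pairR_sum]; exact hlam'ω
  have hDpos : 0 < Dval β lam' := by
    have hex : ∃ i, pairR lam' (β i) < 0 := by
      by_contra h
      push_neg at h
      have hz : ∀ i ∈ Finset.univ, pairR lam' (β i) = 0 :=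
        (Finset.sum_eq_zero_iff_of_nonneg (fun i _ => h i)).mp hsum0
      have hker : ⊤ ≤ LinearMap.ker (pairL lam') := by
        rw [← hspan]
        refine Submodule.span_le.mpr ?_
        rintro x ⟨i, rfl⟩
        exact hz i (Finset.mem_univ i)
      have h0 : pairL lam' ρ = 0 := hker (Submodule.mem_top (x := ρ))
      have : pairR lam' ρ = 0 := h0
      rw [hρ'] at this; norm_num at this
    obtain ⟨i0, hi0⟩ := hex
    have hmem : i0 ∈ Finset.univ.filter (fun i => pairR lam' (β i) ≤ 0) := by
      simp [hi0.le]
    have herase : ∑ i ∈ (Finset.univ.filter (fun i => pairR lam' (β i) ≤ 0)).erase i0,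
        pairR lam' (β i) ≤ 0 := by
      apply Finset.sum_nonpos
      intro i hi
      exact (Finset.mem_filter.mp (Finset.mem_of_mem_erase hi)).2
    have htot := Finset.add_sum_erase _ (fun i => pairR lam' (β i)) hmem
    unfold Dval
    linarith
  -- D = sum over positive part
  have hsplit := Finset.sum_filter_add_sum_filter_not Finset.univ
    (fun i => pairR lam' (β i) ≤ 0) (fun i => pairR lam' (β i))
  have hDeq : Dval β lam' =
      ∑ i ∈ Finset.univ.filter (fun i => ¬ pairR lam' (β i) ≤ 0), pairR lam' (β i) := by
    unfold Dval; linarith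
  -- s' bounds
  set s' : ℝ := ∑ i ∈ S, pairR lam' (β i) with hs'
  have hs'pos : 0 < s' := Finset.sum_pos hSpos hS
  have hSsub : S ⊆ Finset.univ.filter (fun i => ¬ pairR lam' (β i) ≤ 0) := by
    intro i hi
    simp only [Finset.mem_filter, Finset.mem_univ, true_and]
    exact not_le.mpr (hSpos i hi)
  have hs'D : s' ≤ Dval β lam' := by
    rw [hDeq]
    apply Finset.sum_le_sum_of_subset_of_nonneg hSsub
    intro i hi _
    exact (not_le.mp (Finset.mem_filter.mp hi).2).le
  -- integrality of pairR lam' μ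
  have hμint : ∃ z : ℤ, pairR lam' μ = (z : ℝ) := by
    obtain ⟨c, hc⟩ := hχM
    choose b hb using hβint
    obtain ⟨z, hz⟩ := hlam'int (fun k => c k + ∑ i ∈ S, b i k)
    refine ⟨z, ?_⟩
    rw [← hz]
    congr 1
    funext k
    rw [hμ]
    simp only [Pi.add_apply, Finset.sum_apply, hc, hb]
    push_cast
    ring
  obtain ⟨z, hz⟩ := hμint
  have hμa : pairR lam' μ = a + s' := by
    rw [hμ, pairR_add, pairR_sum]
  have hμρ : pairR lam' (μ + ρ) = a + s' - 1 := by
    rw [pairR_add, hμa, hρ']; ring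
  -- lam0 computations
  set t : ℝ := pairR lam0 (χ - θ) with ht
  set sβ0 : ℝ := ∑ i ∈ S, pairR lam0 (β i) with hsβ0
  have hsβ0neg : sβ0 < 0 := by
    have : 0 < ∑ i ∈ S, -pairR lam0 (β i) :=
      Finset.sum_pos (fun i _ => neg_pos.mpr (hlam0 i)) hS
    rw [Finset.sum_neg_distrib] at this
    linarith
  have hμ0 : pairR lam0 (μ - θ) = t + sβ0 := by
    rw [hμ]
    rw [show χ + ∑ i ∈ S, β i - θ = (χ - θ) + ∑ i ∈ S, β i by ring]
    rw [pairR_add, pairR_sum]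
  -- lower bound for sβ0 vs positive part
  have hP1 : ∑ i ∈ Finset.univ.filter (fun i => ¬ pairR lam' (β i) ≤ 0),
      pairR lam0 (β i) ≤ sβ0 := by
    have := Finset.sum_le_sum_of_subset_of_nonneg (f := fun i => -pairR lam0 (β i)) hSsub
      (fun i _ _ => (neg_pos.mpr (hlam0 i)).le)
    rw [Finset.sum_neg_distrib, Finset.sum_neg_distrib] at this
    linarith
  have hP2sub : Finset.univ.filter (fun i => ¬ pairR lam' (β i) ≤ 0) ⊆
      Finset.univ.filter (fun i => ¬ pairR lam' (β i) < 0) := by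
    intro i hi
    have := not_le.mp (Finset.mem_filter.mp hi).2
    simp only [Finset.mem_filter, Finset.mem_univ, true_and]
    exact not_lt.mpr this.le
  have hP2 : ∑ i ∈ Finset.univ.filter (fun i => ¬ pairR lam' (β i) < 0),
      pairR lam0 (β i) ≤
      ∑ i ∈ Finset.univ.filter (fun i => ¬ pairR lam' (β i) ≤ 0), pairR lam0 (β i) := by
    have := Finset.sum_le_sum_of_subset_of_nonneg (f := fun i => -pairR lam0 (β i)) hP2sub
      (fun i _ _ => (neg_pos.mpr (hlam0 i)).le)
    rw [Finset.sum_neg_distrib, Finset.sum_neg_distrib] at this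
    linarith
  have hsplit2 := Finset.sum_filter_add_sum_filter_not Finset.univ
    (fun i => pairR lam' (β i) < 0) (fun i => pairR lam0 (β i))
  have hQ : Qval β lam0 lam' = (-∑ i, pairR lam0 (β i)) / 2 +
      ∑ i ∈ Finset.univ.filter (fun i => pairR lam' (β i) < 0), pairR lam0 (β i) := rfl
  -- the two-sided bound for pairR lam0 (μ - θ)
  have hμ0lb : -((-∑ i, pairR lam0 (β i)) / 2) < t + sβ0 := by linarith
  have hμ0ub : t + sβ0 < (-∑ i, pairR lam0 (β i)) / 2 := by linarith
  -- rvalRho of χ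
  have hrχ : rvalRho β lam' ρ θ χ = (-a + 1) / Dval β lam' := by
    unfold rvalRho
    rw [hχθ, abs_of_nonpos haneg, hρ']
    ring_nf
  have hra : 1/2 * Dval β lam' ≤ -a + 1 := by
    rw [hrχ] at hχ2
    exact (le_div_iff₀ hDpos).mp hχ2
  rcases lt_or_gt_of_ne hμplus with hcase | hcase
  · -- μ⁺ = μ
    have hmp : muPlus lam' ρ w0 μ = μ := if_pos hcase
    have hzle : (z : ℝ) ≤ 0 := by
      have : (z : ℝ) < 1 := by rw [← hz]; linarith [hμρ]
      have : z < 1 := by exact_mod_cast this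
      exact_mod_cast (by omega : z ≤ 0)
    have hμle : a + s' ≤ 0 := by rw [← hμa, hz]; exact hzle
    have hμθ' : pairR lam' (μ - θ) = a + s' := by rw [pairR_sub, hμa, hθ']; ring
    have hrμ : rvalRho β lam' ρ θ μ = (-(a + s') + 1) / Dval β lam' := by
      unfold rvalRho
      rw [hμθ', abs_of_nonpos hμle, hρ']
      ring_nf
    have hstrict : rvalRho β lam' ρ θ μ < rvalRho β lam' ρ θ χ := by
      rw [hrμ, hrχ]
      apply (div_lt_div_iff_of_pos_right hDpos).mpr
      linarith
    refine ⟨?_, by rw [hmp]; exact hstrict.le, fun _ => by rw [hmp]; exact hstrict⟩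
    rw [hmp, hμ0, abs_le]
    constructor <;> linarith
  · -- μ⁺ = w0 (μ + ρ) - ρ
    have hmp : muPlus lam' ρ w0 μ = w0 (μ + ρ) - ρ := if_neg (not_lt.mpr hcase.le)
    have hzge : (2 : ℝ) ≤ (z : ℝ) := by
      have h1 : (1 : ℝ) < (z : ℝ) := by rw [← hz]; linarith [hμρ]
      have : (1 : ℤ) < z := by exact_mod_cast h1
      exact_mod_cast (by omega : (2:ℤ) ≤ z)
    have hm2 : 2 ≤ a + s' := by rw [← hμa, hz]; exact hzge
    have hlam0eq : pairR lam0 (muPlus lam' ρ w0 μ - θ) = t + sβ0 := by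
      rw [hmp]
      rw [show w0 (μ + ρ) - ρ - θ = (w0 (μ + ρ)) - (ρ + θ) by ring]
      rw [pairR_sub, hw0lam0, pairR_add, pairR_add, hρ0, ← hμ0, pairR_sub]
      ring
    have hlam'eq : pairR lam' (muPlus lam' ρ w0 μ - θ) = 2 - (a + s') := by
      rw [hmp]
      rw [show w0 (μ + ρ) - ρ - θ = (w0 (μ + ρ)) - (ρ + θ) by ring]
      rw [pairR_sub, hw0lam', hμρ, pairR_add, hρ', hθ']
      ring
    have habs : |pairR lam' (muPlus lam' ρ w0 μ - θ)| = (a + s') - 2 := by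
      rw [hlam'eq, abs_of_nonpos (by linarith)]
      ring
    have hrμp : rvalRho β lam' ρ θ (muPlus lam' ρ w0 μ) = ((a + s') - 1) / Dval β lam' := by
      unfold rvalRho
      rw [habs, hρ']
      ring_nf
    constructor
    · rw [hlam0eq, abs_le]; constructor <;> linarith
    constructor
    · rw [hrμp, hrχ]
      apply (div_le_div_iff_of_pos_right hDpos).mpr
      linarith
    · intro hgt
      rw [hrχ] at hgt
      have : 1/2 * Dval β lam' < -a + 1 := (lt_div_iff₀ hDpos).mp hgt
      rw [hrμp, hrχ]
      apply (div_lt_div_iff_of_pos_right hDpos).mpr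
      linarith
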